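/- Let S_P = (S, s_I, G, Succ) be an unlabeled state model and let ∼ be a faithful equivalence relation on S. If s and t are states with s ∼ t, then V*(s) = V*(t), i.e., the minimum length of a goal-reaching trajectory seeded at s equals that seeded at t (and one exists from s iff one exists from t). -/
import Mathlib


/-- A relation `r` is faithful for the model `(S, s_I, G, Succ)`. -/
def Faithful {S : Type*} (Succ : S → S → Prop) (G : Set S) (r : S → S → Prop) : Prop :=
  (∀ s s' t, Succ s s' → r t s → ∃ t', Succ t t' ∧ r t' s') ∧
  (∀ s t, r s t → (s ∈ G ↔ t ∈ G))

/-- There is a goal-reaching trajectory of length `n` seeded at `s`: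
a sequence `s = s_0, s_1, …, s_n` with `(s_i, s_{i+1}) ∈ Succ` and `s_n ∈ G`. -/
def GoalReach {S : Type*} (Succ : S → S → Prop) (G : Set S) (s : S) (n : ℕ) : Prop :=
  ∃ τ : ℕ → S, τ 0 = s ∧ (∀ i < n, Succ (τ i) (τ (i + 1))) ∧ τ n ∈ G

lemma goalreach_zero {S : Type*} (Succ : S → S → Prop) (G : Set S) (s : S) :
    GoalReach Succ G s 0 ↔ s ∈ G := by
  constructor
  · rintro ⟨τ, h0, _, hg⟩; rwa [h0] at hg
  · intro h; exact ⟨fun _ => s, rfl, fun i hi => absurd hi (Nat.not_lt_zero i), h⟩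

lemma goalreach_succ {S : Type*} (Succ : S → S → Prop) (G : Set S) (s : S) (n : ℕ) :
    GoalReach Succ G s (n + 1) ↔ ∃ s', Succ s s' ∧ GoalReach Succ G s' n := by
  constructor
  · rintro ⟨τ, h0, hstep, hg⟩
    refine ⟨τ 1, h0 ▸ hstep 0 (Nat.succ_pos n), fun i => τ (i + 1), rfl, ?_, hg⟩
    intro i hi
    exact hstep (i + 1) (Nat.succ_lt_succ hi)
  · rintro ⟨s', hss', τ, h0, hstep, hg⟩
    refine ⟨fun i => if i = 0 then s else τ (i - 1), rfl, ?_, ?_⟩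
    · intro i hi
      rcases Nat.eq_zero_or_pos i with h | h
      · subst h; simpa [h0] using hss'
      · have h1 : i ≠ 0 := Nat.pos_iff_ne_zero.mp h
        simp only [h1, if_false, Nat.add_sub_cancel, Nat.succ_ne_zero, if_neg]
        have heq : i - 1 + 1 = i := Nat.succ_pred_eq_of_pos h
        have hs := hstep (i - 1) (by omega)
        rwa [heq] at hs
    · simpa using hg

lemma goalreach_congr {S : Type*} {Succ : S → S → Prop} {G : Set S} {r : S → S → Prop}
    (hfaithful : Faithful Succ G r) :
    ∀ n s t, r t s → GoalReach Succ G s n → GoalReach Succ G t n := by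
  intro n
  induction n with
  | zero =>
    intro s t hts hs
    rw [goalreach_zero] at hs ⊢
    exact (hfaithful.2 t s hts).mpr hs
  | succ n ih =>
    intro s t hts hs
    rw [goalreach_succ] at hs ⊢
    obtain ⟨s', hss', hs'⟩ := hs
    obtain ⟨t', htt', ht's'⟩ := hfaithful.1 s s' t hss' hts
    exact ⟨t', htt', ih s' t' ht's' hs'⟩

/-- If `∼` is a faithful equivalence relation and `s ∼ t`, then a
goal-reaching trajectory exists from `s` iff one exists from `t`, and the minimum
length of a goal-reaching trajectory seeded at `s` equals that seeded at `t`,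
i.e., `V*(s) = V*(t)`. -/
theorem optimal_cost_invariant {S : Type*}
    (sI : S) (G : Set S) (Succ : S → S → Prop) (r : S → S → Prop)
    (hequiv : Equivalence r) (hfaithful : Faithful Succ G r)
    (s t : S) (hst : r s t) :
    ((∃ n, GoalReach Succ G s n) ↔ (∃ n, GoalReach Succ G t n)) ∧
    sInf {n | GoalReach Succ G s n} = sInf {n | GoalReach Succ G t n} := by
  have hset : {n | GoalReach Succ G s n} = {n | GoalReach Succ G t n} := by
    ext n
    exact ⟨fun h => goalreach_congr hfaithful n s t (hequiv.symm hst) h,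
      fun h => goalreach_congr hfaithful n t s hst h⟩
  constructor
  · constructor
    · rintro ⟨n, h⟩; exact ⟨n, goalreach_congr hfaithful n s t (hequiv.symm hst) h⟩
    · rintro ⟨n, h⟩; exact ⟨n, goalreach_congr hfaithful n t s hst h⟩
  · rw [hset]
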